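/- Let p be a prime, n ≥ 2, G = GL_n(𝔽_p) ⋉ 𝔽_p^n (the affine group, with GL_n(𝔽_p) acting on 𝔽_p^n), and let A ≅ 𝔽_p be the subgroup of translations by vectors of the form (t, 0, …, 0). Then: (1) the normalizer N_G(A) equals B ⋉ 𝔽_p^n, where B ≤ GL_n(𝔽_p) is the stabilizer of the line 𝔽_p·(1,0,…,0); (2) for every g ∈ G not in N_G(A), A ∩ A^g is trivial; consequently c_p(A, G) = (p^n − 1)/(p − 1) − 1 and c_m(A, G) = 0 for all m ∉ {1, p}. -/

import Mathlib

section CommensurizerDefs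

variable {G : Type*} [Group G]

/-- The conjugate subgroup `A ^ g = g⁻¹ A g`. -/
def conjSubgroup (g : G) (A : Subgroup G) : Subgroup G :=
  A.map (MulAut.conj g⁻¹).toMonoidHom

/-- `χ_{A,G}(g) = [A : A ∩ A^g]` (`0` if the index is infinite). -/
noncomputable def commIndex (A : Subgroup G) (g : G) : ℕ :=
  (conjSubgroup g A).relIndex A

/-- `g` commensurates `A` if `A ∩ A^g` has finite index in both `A` and `A^g`. -/
def Commensurates (A : Subgroup G) (g : G) : Prop :=
  (conjSubgroup g A).relIndex A ≠ 0 ∧ A.relIndex (conjSubgroup g A) ≠ 0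

/-- `Comm_n(A, G)`. -/
def commSet (A : Subgroup G) (n : ℕ) : Set G :=
  {g : G | Commensurates A g ∧ commIndex A g = n}

/-- The orbits of the left multiplication action of the normalizer `N_G(A)`
on `Comm_n(A, G)`. -/
def commOrbits (A : Subgroup G) (n : ℕ) : Set (Set G) :=
  {s : Set G | ∃ g ∈ commSet A n, s = (fun x => x * g) '' (Subgroup.normalizer (A : Set G) : Set G)}

/-- `c_n(A, G) = |N_G(A) \ Comm_n(A, G)|`. -/
noncomputable def cCount (A : Subgroup G) (n : ℕ) : ℕ :=
  Nat.card ↥(commOrbits A n)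

end CommensurizerDefs

/-- The action of `GL_n(𝔽_p)` on the (multiplicative version of the) translation group
`𝔽_p^n`, by matrix-vector multiplication. -/
def glMulAut (p n : ℕ) [Fact p.Prime] :
    GL (Fin n) (ZMod p) →* MulAut (Multiplicative (Fin n → ZMod p)) where
  toFun g :=
    { toFun := fun v => Multiplicative.ofAdd (g.val.mulVec v.toAdd)
      invFun := fun v => Multiplicative.ofAdd ((g⁻¹).val.mulVec v.toAdd)
      left_inv := fun v => by
        show Multiplicative.ofAdd ((g⁻¹).val.mulVec (g.val.mulVec v.toAdd)) = v
        rw [Matrix.mulVec_mulVec, ← Units.val_mul, inv_mul_cancel, Units.val_one,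
          Matrix.one_mulVec]
        rfl
      right_inv := fun v => by
        show Multiplicative.ofAdd (g.val.mulVec ((g⁻¹).val.mulVec v.toAdd)) = v
        rw [Matrix.mulVec_mulVec, ← Units.val_mul, mul_inv_cancel, Units.val_one,
          Matrix.one_mulVec]
        rfl
      map_mul' := fun v w => by
        show Multiplicative.ofAdd (g.val.mulVec (v.toAdd + w.toAdd)) = _
        rw [Matrix.mulVec_add, ofAdd_add] }
  map_one' := by
    refine MulEquiv.ext fun v => ?_
    show Multiplicative.ofAdd ((1 : GL (Fin n) (ZMod p)).val.mulVec v.toAdd) = v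
    rw [Units.val_one, Matrix.one_mulVec]
    rfl
  map_mul' g h := by
    refine MulEquiv.ext fun v => ?_
    show Multiplicative.ofAdd ((g * h).val.mulVec v.toAdd) =
      Multiplicative.ofAdd (g.val.mulVec (h.val.mulVec v.toAdd))
    rw [Matrix.mulVec_mulVec, Units.val_mul]

/-- The affine group `GL_n(𝔽_p) ⋉ 𝔽_p^n` (with the standard linear action). -/
abbrev AffGL (p n : ℕ) [Fact p.Prime] :=
  SemidirectProduct (Multiplicative (Fin n → ZMod p)) (GL (Fin n) (ZMod p)) (glMulAut p n)

/-- The subgroup `A ≅ 𝔽_p` of translations by vectors of the form `(t, 0, …, 0)`. -/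
def lineSubgroup (p n : ℕ) [Fact p.Prime] (hn : 0 < n) : Subgroup (AffGL p n) :=
  (SemidirectProduct.inl.comp
    ((AddMonoidHom.single (fun _ : Fin n => ZMod p) ⟨0, hn⟩).toMultiplicative)).range

section Helpers

/-- Cosets: `(· * g) '' N = (· * g') '' N ↔ g * g'⁻¹ ∈ N`. -/
theorem coset_image_eq_iff {G : Type*} [Group G] (N : Subgroup G) (g g' : G) :
    ((fun x => x * g) '' (N : Set G) = (fun x => x * g') '' (N : Set G)) ↔ g * g'⁻¹ ∈ N := by
  have himg : ∀ (h : G) (x : G), x ∈ (fun y => y * h) '' (N : Set G) ↔ x * h⁻¹ ∈ N := by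
    intro h x
    constructor
    · rintro ⟨y, hy, rfl⟩; simpa using hy
    · intro hx; exact ⟨x * h⁻¹, hx, by group⟩
  constructor
  · intro hEq
    have : g ∈ (fun y => y * g') '' (N : Set G) := by
      rw [← hEq, himg]; simpa using N.one_mem
    rwa [himg] at this
  · intro hgg'
    ext x
    rw [himg, himg]
    constructor
    · intro hx
      have := N.mul_mem hx hgg'
      simpa [mul_assoc] using this
    · intro hx
      have := N.mul_mem hx (N.inv_mem hgg')
      simpa [mul_assoc] using this

variable (p n : ℕ) [Fact p.Prime] (hn : 0 < n)

/-- abbreviation for the base vector. -/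
noncomputable def e₀ : Fin n → ZMod p := Pi.single (⟨0, hn⟩ : Fin n) (1 : ZMod p)

theorem e₀_ne_zero : e₀ p n hn ≠ 0 := by
  intro h
  have := congrFun h ⟨0, hn⟩
  simp [e₀] at this

theorem mem_lineSubgroup (x : AffGL p n) :
    x ∈ lineSubgroup p n hn ↔
      ∃ t : ZMod p, x = SemidirectProduct.inl (Multiplicative.ofAdd (Pi.single (⟨0, hn⟩ : Fin n) t)) := by
  constructor
  · rintro ⟨t, rfl⟩
    exact ⟨t.toAdd, rfl⟩
  · rintro ⟨t, rfl⟩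
    exact ⟨Multiplicative.ofAdd t, rfl⟩

theorem conj_inl (g : AffGL p n) (w : Multiplicative (Fin n → ZMod p)) :
    g * SemidirectProduct.inl w * g⁻¹ = SemidirectProduct.inl (glMulAut p n g.right w) := by
  ext
  · simp [SemidirectProduct.mul_left, SemidirectProduct.inv_left, mul_comm]
  · simp

end Helpers
section Helpers2
variable (p n : ℕ) [Fact p.Prime] (hn : 0 < n)

theorem smul_e₀ (t : ZMod p) : t • e₀ p n hn = Pi.single (⟨0, hn⟩ : Fin n) t := by
  ext j
  rcases eq_or_ne j ⟨0, hn⟩ with h | h <;> simp [e₀, h, Pi.single_apply]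

theorem coeff_ne_zero (M : GL (Fin n) (ZMod p)) (c : ZMod p)
    (hc : c • e₀ p n hn = M.val.mulVec (e₀ p n hn)) : c ≠ 0 := by
  rintro rfl
  apply e₀_ne_zero p n hn
  have h2 : (M⁻¹).val.mulVec (M.val.mulVec (e₀ p n hn)) = e₀ p n hn := by
    rw [Matrix.mulVec_mulVec, ← Units.val_mul, inv_mul_cancel, Units.val_one, Matrix.one_mulVec]
  rw [← h2, ← hc, zero_smul, Matrix.mulVec_zero]

theorem mulVec_inv_eq (M : GL (Fin n) (ZMod p)) (c : ZMod p)
    (hc : c • e₀ p n hn = M.val.mulVec (e₀ p n hn)) :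
    (M⁻¹).val.mulVec (e₀ p n hn) = c⁻¹ • e₀ p n hn := by
  have hc0 := coeff_ne_zero p n hn M c hc
  have h2 : (M⁻¹).val.mulVec (M.val.mulVec (e₀ p n hn)) = e₀ p n hn := by
    rw [Matrix.mulVec_mulVec, ← Units.val_mul, inv_mul_cancel, Units.val_one, Matrix.one_mulVec]
  have h3 : c • (M⁻¹).val.mulVec (e₀ p n hn) = e₀ p n hn := by
    rw [← Matrix.mulVec_smul, hc, h2]
  calc (M⁻¹).val.mulVec (e₀ p n hn) = c⁻¹ • (c • (M⁻¹).val.mulVec (e₀ p n hn)) := by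
        rw [smul_smul, inv_mul_cancel₀ hc0, one_smul]
    _ = c⁻¹ • e₀ p n hn := by rw [h3]

theorem span_inv_iff (M : GL (Fin n) (ZMod p)) :
    M.val.mulVec (e₀ p n hn) ∈ Submodule.span (ZMod p) {e₀ p n hn} ↔
      (M⁻¹).val.mulVec (e₀ p n hn) ∈ Submodule.span (ZMod p) {e₀ p n hn} := by
  have key : ∀ M : GL (Fin n) (ZMod p),
      M.val.mulVec (e₀ p n hn) ∈ Submodule.span (ZMod p) {e₀ p n hn} →
      (M⁻¹).val.mulVec (e₀ p n hn) ∈ Submodule.span (ZMod p) {e₀ p n hn} := by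
    intro M h
    obtain ⟨c, hc⟩ := Submodule.mem_span_singleton.mp h
    exact Submodule.mem_span_singleton.mpr ⟨c⁻¹, (mulVec_inv_eq p n hn M c hc).symm⟩
  refine ⟨key M, fun h => ?_⟩
  simpa using key M⁻¹ h

theorem mem_normalizer_iff_line (x : AffGL p n) :
    x ∈ (Subgroup.normalizer (lineSubgroup p n hn : Set (AffGL p n))) ↔
      x.right.val.mulVec (e₀ p n hn) ∈ Submodule.span (ZMod p) {e₀ p n hn} := by
  rw [Subgroup.mem_normalizer_iff]
  constructor
  · intro h
    have h1 : SemidirectProduct.inl (φ := glMulAut p n)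
        (Multiplicative.ofAdd (Pi.single (⟨0, hn⟩ : Fin n) (1 : ZMod p))) ∈ lineSubgroup p n hn :=
      (mem_lineSubgroup p n hn _).mpr ⟨1, rfl⟩
    have h2 := (h _).mp h1
    rw [conj_inl] at h2
    obtain ⟨t, ht⟩ := (mem_lineSubgroup p n hn _).mp h2
    have ht2 : x.right.val.mulVec (Pi.single (⟨0, hn⟩ : Fin n) (1 : ZMod p)) =
        Pi.single (⟨0, hn⟩ : Fin n) t := by
      have := SemidirectProduct.inl_injective ht
      exact Multiplicative.ofAdd.injective this
    rw [show (e₀ p n hn) = Pi.single (⟨0, hn⟩ : Fin n) (1 : ZMod p) from rfl, ht2,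
      ← smul_e₀ p n hn t]
    exact Submodule.smul_mem _ _ (Submodule.mem_span_singleton_self _)
  · intro h y
    obtain ⟨c, hc⟩ := Submodule.mem_span_singleton.mp h
    constructor
    · intro hy
      obtain ⟨t, rfl⟩ := (mem_lineSubgroup p n hn _).mp hy
      rw [conj_inl]
      refine (mem_lineSubgroup p n hn _).mpr ⟨t * c, ?_⟩
      congr 1
      show Multiplicative.ofAdd (x.right.val.mulVec (Pi.single (⟨0, hn⟩ : Fin n) t)) = _
      congr 1
      rw [← smul_e₀ p n hn t, Matrix.mulVec_smul, ← hc, smul_smul, smul_e₀]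
    · intro hy
      obtain ⟨t, ht⟩ := (mem_lineSubgroup p n hn _).mp hy
      have hy2 : y = x⁻¹ * SemidirectProduct.inl
          (Multiplicative.ofAdd (Pi.single (⟨0, hn⟩ : Fin n) t)) * (x⁻¹)⁻¹ := by
        rw [← ht]; group
      rw [conj_inl] at hy2
      refine (mem_lineSubgroup p n hn _).mpr ⟨t * c⁻¹, ?_⟩
      rw [hy2]
      congr 1
      show Multiplicative.ofAdd ((x.right⁻¹).val.mulVec (Pi.single (⟨0, hn⟩ : Fin n) t)) = _
      congr 1
      rw [← smul_e₀ p n hn t, Matrix.mulVec_smul, mulVec_inv_eq p n hn _ c hc, smul_smul, smul_e₀]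

end Helpers2
section Helpers3
variable (p n : ℕ) [Fact p.Prime] (hn : 0 < n)

theorem mem_conjSubgroup_iff (g x : AffGL p n) :
    x ∈ conjSubgroup g (lineSubgroup p n hn) ↔
      ∃ t : ZMod p, x = SemidirectProduct.inl
        (Multiplicative.ofAdd ((g.right⁻¹).val.mulVec (Pi.single (⟨0, hn⟩ : Fin n) t))) := by
  constructor
  · rintro ⟨a, ha, rfl⟩
    obtain ⟨t, rfl⟩ := (mem_lineSubgroup p n hn a).mp ha
    refine ⟨t, ?_⟩
    show g⁻¹ * SemidirectProduct.inl (Multiplicative.ofAdd (Pi.single (⟨0, hn⟩ : Fin n) t)) * (g⁻¹)⁻¹ = _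
    rw [conj_inl]
    rfl
  · rintro ⟨t, rfl⟩
    refine ⟨SemidirectProduct.inl (Multiplicative.ofAdd (Pi.single (⟨0, hn⟩ : Fin n) t)),
      (mem_lineSubgroup p n hn _).mpr ⟨t, rfl⟩, ?_⟩
    show g⁻¹ * SemidirectProduct.inl (Multiplicative.ofAdd (Pi.single (⟨0, hn⟩ : Fin n) t)) * (g⁻¹)⁻¹ = _
    rw [conj_inl]
    rfl

theorem inter_eq_bot (g : AffGL p n) (hg : g ∉ (Subgroup.normalizer (lineSubgroup p n hn : Set (AffGL p n)))) :
    lineSubgroup p n hn ⊓ conjSubgroup g (lineSubgroup p n hn) = ⊥ := by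
  rw [eq_bot_iff]
  rintro x ⟨hx1, hx2⟩
  obtain ⟨t, rfl⟩ := (mem_lineSubgroup p n hn x).mp hx1
  obtain ⟨s, hs⟩ := (mem_conjSubgroup_iff p n hn g _).mp hx2
  have hvec : Pi.single (⟨0, hn⟩ : Fin n) t = (g.right⁻¹).val.mulVec (Pi.single (⟨0, hn⟩ : Fin n) s) :=
    Multiplicative.ofAdd.injective (SemidirectProduct.inl_injective hs)
  have hs0 : s = 0 := by
    by_contra hs0
    apply hg
    rw [mem_normalizer_iff_line, span_inv_iff]
    refine Submodule.mem_span_singleton.mpr ⟨s⁻¹ * t, ?_⟩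
    have h4 : s • (g.right⁻¹).val.mulVec (e₀ p n hn) = t • e₀ p n hn := by
      rw [← Matrix.mulVec_smul, smul_e₀, ← hvec, smul_e₀]
    rw [mul_smul, ← h4, smul_smul, inv_mul_cancel₀ hs0, one_smul]
  subst hs0
  have ht0 : t = 0 := by
    have := congrFun hvec ⟨0, hn⟩
    simpa [Pi.single_apply] using this
  subst ht0
  simp only [Subgroup.mem_bot]
  rw [Pi.single_zero]
  show SemidirectProduct.inl (Multiplicative.ofAdd ((0 : Fin n → ZMod p))) = 1
  simp

theorem conjSubgroup_eq_self (g : AffGL p n) (hg : g ∈ (Subgroup.normalizer (lineSubgroup p n hn : Set (AffGL p n)))) :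
    conjSubgroup g (lineSubgroup p n hn) = lineSubgroup p n hn := by
  ext x
  rw [Subgroup.mem_normalizer_iff] at hg
  constructor
  · rintro ⟨a, ha, rfl⟩
    show g⁻¹ * a * (g⁻¹)⁻¹ ∈ _
    rw [inv_inv]
    exact (hg _).mpr (by simpa [mul_assoc] using ha)
  · intro hx
    refine ⟨g * x * g⁻¹, (hg x).mp hx, ?_⟩
    show g⁻¹ * (g * x * g⁻¹) * (g⁻¹)⁻¹ = x
    group

theorem card_line : Nat.card (lineSubgroup p n hn) = p := by
  have h1 : Function.Injective (fun t : ZMod p => (SemidirectProduct.inl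
      (Multiplicative.ofAdd (Pi.single (⟨0, hn⟩ : Fin n) t)) : AffGL p n)) := by
    intro a b hab
    have := Multiplicative.ofAdd.injective (SemidirectProduct.inl_injective hab)
    have := congrFun this ⟨0, hn⟩
    simpa using this
  have e : ZMod p ≃ (lineSubgroup p n hn) := by
    refine Equiv.ofBijective (fun t => ⟨_, (mem_lineSubgroup p n hn _).mpr ⟨t, rfl⟩⟩) ⟨?_, ?_⟩
    · intro a b hab
      exact h1 (congrArg Subtype.val hab)
    · rintro ⟨x, hx⟩
      obtain ⟨t, rfl⟩ := (mem_lineSubgroup p n hn x).mp hx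
      exact ⟨t, rfl⟩
  rw [← Nat.card_congr e, Nat.card_zmod]

end Helpers3
section Helpers4
variable (p n : ℕ) [Fact p.Prime] (hn : 0 < n)

theorem exists_GL (v : Fin n → ZMod p) (hv : v ≠ 0) :
    ∃ M : GL (Fin n) (ZMod p), M.val.mulVec (e₀ p n hn) = v := by
  classical
  have hli : LinearIndepOn (ZMod p) id ({v} : Set (Fin n → ZMod p)) :=
    LinearIndepOn.singleton hv
  let b := Module.Basis.extend hli
  let σ : hli.extend (Set.subset_univ _) ≃ Fin n := b.indexEquiv (Pi.basisFun (ZMod p) (Fin n))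
  have hvmem : v ∈ hli.extend (Set.subset_univ ({v} : Set (Fin n → ZMod p))) :=
    hli.subset_extend _ (Set.mem_singleton v)
  let τ : hli.extend (Set.subset_univ _) ≃ Fin n :=
    σ.trans (Equiv.swap (σ ⟨v, hvmem⟩) ⟨0, hn⟩)
  let b' := b.reindex τ
  have hb'0 : b' ⟨0, hn⟩ = v := by
    have hτ : τ.symm ⟨0, hn⟩ = ⟨v, hvmem⟩ := by
      rw [Equiv.symm_apply_eq]
      simp [τ, Equiv.swap_apply_left]
    rw [Module.Basis.reindex_apply, hτ]
    exact Module.Basis.extend_apply_self hli _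
  let f : (Fin n → ZMod p) ≃ₗ[ZMod p] (Fin n → ZMod p) :=
    (Pi.basisFun (ZMod p) (Fin n)).equiv b' (Equiv.refl _)
  refine ⟨Matrix.GeneralLinearGroup.toLin.symm
    (LinearMap.GeneralLinearGroup.ofLinearEquiv f), ?_⟩
  have h1 : (Matrix.GeneralLinearGroup.toLin.symm
      (LinearMap.GeneralLinearGroup.ofLinearEquiv f)).val.mulVecLin =
      (LinearMap.GeneralLinearGroup.ofLinearEquiv f).val := by
    rw [← Matrix.GeneralLinearGroup.coe_toLin, MulEquiv.apply_symm_apply]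
  have h2 : (Matrix.GeneralLinearGroup.toLin.symm
      (LinearMap.GeneralLinearGroup.ofLinearEquiv f)).val.mulVec (e₀ p n hn) = f (e₀ p n hn) := by
    have := congrArg (fun g => g (e₀ p n hn)) h1
    simpa [Matrix.mulVecLin_apply] using this
  rw [h2]
  have he : (e₀ p n hn) = Pi.basisFun (ZMod p) (Fin n) ⟨0, hn⟩ := by
    rw [Pi.basisFun_apply]; rfl
  rw [he]
  rw [Module.Basis.equiv_apply]
  simpa using hb'0

end Helpers4
section Helpers5
variable (p n : ℕ) [Fact p.Prime] (hn : 0 < n)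

noncomputable def projEquiv :
    (Projectivization (ZMod p) (Fin n → ZMod p)) × (ZMod p)ˣ ≃
      {v : Fin n → ZMod p // v ≠ 0} := by
  classical
  refine Equiv.ofBijective
    (fun x => ⟨x.2.val • x.1.rep, smul_ne_zero (Units.ne_zero x.2) x.1.rep_nonzero⟩)
    ⟨?_, ?_⟩
  · rintro ⟨x, c⟩ ⟨y, d⟩ h
    have h' : c.val • x.rep = d.val • y.rep := congrArg Subtype.val h
    have hx : x = y := by
      rw [← x.mk_rep, ← y.mk_rep, Projectivization.mk_eq_mk_iff]
      refine ⟨c⁻¹ * d, ?_⟩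
      show (c⁻¹ * d).val • y.rep = x.rep
      rw [Units.val_mul, mul_smul, ← h', smul_smul, ← Units.val_mul, inv_mul_cancel,
        Units.val_one, one_smul]
    subst hx
    have hcd : c.val = d.val := by
      have h2 : (c.val - d.val) • x.rep = 0 := by rw [sub_smul, h', sub_self]
      rcases smul_eq_zero.mp h2 with h3 | h3
      · exact sub_eq_zero.mp h3
      · exact absurd h3 x.rep_nonzero
    simp [Prod.ext_iff, Units.ext_iff, hcd]
  · rintro ⟨v, hv⟩
    have h1 : Projectivization.mk (ZMod p) ((Projectivization.mk (ZMod p) v hv).rep)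
        (Projectivization.rep_nonzero _) = Projectivization.mk (ZMod p) v hv :=
      Projectivization.mk_rep _
    obtain ⟨a, ha⟩ := (Projectivization.mk_eq_mk_iff _ _ _ _ _).mp h1
    refine ⟨⟨Projectivization.mk (ZMod p) v hv, a⁻¹⟩, Subtype.ext ?_⟩
    show (a⁻¹).val • (Projectivization.mk (ZMod p) v hv).rep = v
    have ha' : a.val • v = (Projectivization.mk (ZMod p) v hv).rep := ha
    rw [← ha', smul_smul, ← Units.val_mul, inv_mul_cancel, Units.val_one, one_smul]

theorem card_nonzero_vectors :
    Nat.card {v : Fin n → ZMod p // v ≠ 0} = p ^ n - 1 := by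
  classical
  rw [Nat.card_eq_fintype_card]
  have h1 : Fintype.card {v : Fin n → ZMod p // v = 0} = 1 := Fintype.card_subtype_eq 0
  have h2 := Fintype.card_subtype_compl (fun v : Fin n → ZMod p => v = 0)
  have h3 : Fintype.card (Fin n → ZMod p) = p ^ n := by simp [ZMod.card]
  have h4 : Fintype.card {v : Fin n → ZMod p // ¬ v = 0} =
      Fintype.card {v : Fin n → ZMod p // v ≠ 0} := by convert rfl
  rw [← h4, h2, h1, h3]

theorem card_proj_mul :
    Nat.card (Projectivization (ZMod p) (Fin n → ZMod p)) * (p - 1) = p ^ n - 1 := by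
  have h := Nat.card_congr (projEquiv p n)
  rw [Nat.card_prod, card_nonzero_vectors] at h
  have hu : Nat.card (ZMod p)ˣ = p - 1 := by
    rw [Nat.card_eq_fintype_card, ZMod.card_units]
  rwa [hu] at h

instance : Finite (Projectivization (ZMod p) (Fin n → ZMod p)) := by
  have h : Finite ((Projectivization (ZMod p) (Fin n → ZMod p)) × (ZMod p)ˣ) :=
    Finite.of_equiv _ (projEquiv p n).symm
  exact Finite.prod_left (ZMod p)ˣ

theorem card_proj :
    Nat.card (Projectivization (ZMod p) (Fin n → ZMod p)) = (p ^ n - 1) / (p - 1) := by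
  have hp : 1 < p := (Fact.out : p.Prime).one_lt
  have hb : 0 < p - 1 := by omega
  exact (Nat.div_eq_of_eq_mul_left hb (card_proj_mul p n).symm).symm

theorem card_proj_ne (x₀ : Projectivization (ZMod p) (Fin n → ZMod p)) :
    Nat.card {x : Projectivization (ZMod p) (Fin n → ZMod p) // x ≠ x₀} =
      (p ^ n - 1) / (p - 1) - 1 := by
  classical
  letI : Fintype (Projectivization (ZMod p) (Fin n → ZMod p)) := Fintype.ofFinite _
  rw [Nat.card_eq_fintype_card]
  have h2 := Fintype.card_subtype_compl (fun x : Projectivization (ZMod p) (Fin n → ZMod p) => x = x₀)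
  have h1 : Fintype.card {x : Projectivization (ZMod p) (Fin n → ZMod p) // x = x₀} = 1 :=
    Fintype.card_subtype_eq x₀
  have h4 : Fintype.card {x : Projectivization (ZMod p) (Fin n → ZMod p) // ¬ x = x₀} =
      Fintype.card {x : Projectivization (ZMod p) (Fin n → ZMod p) // x ≠ x₀} := by convert rfl
  rw [← h4, h2, h1, ← Nat.card_eq_fintype_card, card_proj]

end Helpers5
section Helpers6
variable (p n : ℕ) [Fact p.Prime] (hn : 0 < n)

theorem card_conjLine (g : AffGL p n) :
    Nat.card (conjSubgroup g (lineSubgroup p n hn)) = p := by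
  have e := Subgroup.equivMapOfInjective (lineSubgroup p n hn)
    (MulAut.conj (g⁻¹ : AffGL p n)).toMonoidHom (MulAut.conj (g⁻¹ : AffGL p n)).injective
  rw [show conjSubgroup g (lineSubgroup p n hn) = (lineSubgroup p n hn).map
    (MulAut.conj (g⁻¹ : AffGL p n)).toMonoidHom from rfl, ← Nat.card_congr e.toEquiv,
    card_line]

theorem commIndex_mem (g : AffGL p n) (hg : g ∈ (Subgroup.normalizer (lineSubgroup p n hn : Set (AffGL p n)))) :
    commIndex (lineSubgroup p n hn) g = 1 := by
  show (conjSubgroup g (lineSubgroup p n hn)).relIndex (lineSubgroup p n hn) = 1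
  rw [conjSubgroup_eq_self p n hn g hg, Subgroup.relIndex_self]

theorem commIndex_not_mem (g : AffGL p n) (hg : g ∉ (Subgroup.normalizer (lineSubgroup p n hn : Set (AffGL p n)))) :
    commIndex (lineSubgroup p n hn) g = p := by
  show (conjSubgroup g (lineSubgroup p n hn)).relIndex (lineSubgroup p n hn) = p
  rw [← Subgroup.inf_relIndex_right, inf_comm, inter_eq_bot p n hn g hg,
    Subgroup.relIndex_bot_left, card_line]

theorem commensurates_line (g : AffGL p n) : Commensurates (lineSubgroup p n hn) g := by
  have hp : p ≠ 0 := (Fact.out : p.Prime).ne_zero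
  by_cases hg : g ∈ (Subgroup.normalizer (lineSubgroup p n hn : Set (AffGL p n)))
  · constructor
    · rw [conjSubgroup_eq_self p n hn g hg, Subgroup.relIndex_self]; exact one_ne_zero
    · rw [conjSubgroup_eq_self p n hn g hg, Subgroup.relIndex_self]; exact one_ne_zero
  · constructor
    · rw [show (conjSubgroup g (lineSubgroup p n hn)).relIndex (lineSubgroup p n hn) =
        commIndex (lineSubgroup p n hn) g from rfl, commIndex_not_mem p n hn g hg]
      exact hp
    · rw [← Subgroup.inf_relIndex_right, inter_eq_bot p n hn g hg,
        Subgroup.relIndex_bot_left, card_conjLine]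
      exact hp

theorem commSet_line_p : commSet (lineSubgroup p n hn) p =
    {g : AffGL p n | g ∉ (Subgroup.normalizer (lineSubgroup p n hn : Set (AffGL p n)))} := by
  ext g
  simp only [commSet, Set.mem_setOf_eq]
  constructor
  · rintro ⟨-, hidx⟩ hg
    rw [commIndex_mem p n hn g hg] at hidx
    exact (Fact.out : p.Prime).one_lt.ne hidx
  · intro hg
    exact ⟨commensurates_line p n hn g, commIndex_not_mem p n hn g hg⟩

theorem commSet_line_other (m : ℕ) (hm1 : m ≠ 1) (hmp : m ≠ p) :
    commSet (lineSubgroup p n hn) m = ∅ := by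
  ext g
  simp only [commSet, Set.mem_setOf_eq, Set.mem_empty_iff_false, iff_false]
  rintro ⟨-, hidx⟩
  by_cases hg : g ∈ (Subgroup.normalizer (lineSubgroup p n hn : Set (AffGL p n)))
  · rw [commIndex_mem p n hn g hg] at hidx; exact hm1 hidx.symm
  · rw [commIndex_not_mem p n hn g hg] at hidx; exact hmp hidx.symm

noncomputable def mx (x : Projectivization (ZMod p) (Fin n → ZMod p)) : GL (Fin n) (ZMod p) :=
  (exists_GL p n hn x.rep x.rep_nonzero).choose

theorem mx_spec (x : Projectivization (ZMod p) (Fin n → ZMod p)) :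
    (mx p n hn x).val.mulVec (e₀ p n hn) = x.rep :=
  (exists_GL p n hn x.rep x.rep_nonzero).choose_spec

theorem rep_not_mem_span (x : Projectivization (ZMod p) (Fin n → ZMod p))
    (hx : x ≠ Projectivization.mk (ZMod p) (e₀ p n hn) (e₀_ne_zero p n hn)) :
    x.rep ∉ Submodule.span (ZMod p) {e₀ p n hn} := by
  intro h
  obtain ⟨c, hc⟩ := Submodule.mem_span_singleton.mp h
  have hc0 : c ≠ 0 := by
    rintro rfl
    exact x.rep_nonzero (by rw [← hc, zero_smul])
  apply hx
  rw [← x.mk_rep, Projectivization.mk_eq_mk_iff]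
  exact ⟨Units.mk0 c hc0, hc⟩

theorem gx_not_mem (x : Projectivization (ZMod p) (Fin n → ZMod p))
    (hx : x ≠ Projectivization.mk (ZMod p) (e₀ p n hn) (e₀_ne_zero p n hn)) :
    (SemidirectProduct.inr (mx p n hn x)⁻¹ : AffGL p n) ∉ (Subgroup.normalizer (lineSubgroup p n hn : Set (AffGL p n))) := by
  rw [mem_normalizer_iff_line]
  intro h
  apply rep_not_mem_span p n hn x hx
  rw [← mx_spec p n hn x]
  exact (span_inv_iff p n hn (mx p n hn x)).mpr (by simpa using h)

end Helpers6
/-- **Lemma (affine groups over `𝔽_p`).** Let `p` be a prime, `n ≥ 2`,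
`G = GL_n(𝔽_p) ⋉ 𝔽_p^n` the affine group, and `A ≅ 𝔽_p` the subgroup of translations by
vectors of the form `(t, 0, …, 0)`. Then:
(1) the normalizer `N_G(A)` equals `B ⋉ 𝔽_p^n`, where `B ≤ GL_n(𝔽_p)` is the stabilizer
of the line `𝔽_p·(1, 0, …, 0)` (i.e. an element of `G` normalizes `A` iff its linear part
maps `(1, 0, …, 0)` into that line);
(2) for every `g ∈ G` not in `N_G(A)`, the intersection `A ∩ A^g` is trivial;
consequently `c_p(A, G) = (p^n - 1)/(p - 1) - 1` and `c_m(A, G) = 0` for all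
`m ∉ {1, p}`. -/
theorem affine_group_commensurizer (p n : ℕ) [Fact p.Prime] (hn2 : 2 ≤ n)
    (hn : 0 < n) :
    (∀ x : AffGL p n,
        x ∈ (Subgroup.normalizer (lineSubgroup p n hn : Set (AffGL p n))) ↔
          x.right.val.mulVec (Pi.single (⟨0, hn⟩ : Fin n) (1 : ZMod p)) ∈
            Submodule.span (ZMod p)
              {(Pi.single (⟨0, hn⟩ : Fin n) (1 : ZMod p) : Fin n → ZMod p)}) ∧
    (∀ g : AffGL p n, g ∉ (Subgroup.normalizer (lineSubgroup p n hn : Set (AffGL p n))) →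
        lineSubgroup p n hn ⊓ conjSubgroup g (lineSubgroup p n hn) = ⊥) ∧
    cCount (lineSubgroup p n hn) p = (p ^ n - 1) / (p - 1) - 1 ∧
    (∀ m : ℕ, m ≠ 1 → m ≠ p → cCount (lineSubgroup p n hn) m = 0) := by
  have part1 : ∀ x : AffGL p n,
      x ∈ (Subgroup.normalizer (lineSubgroup p n hn : Set (AffGL p n))) ↔
        x.right.val.mulVec (Pi.single (⟨0, hn⟩ : Fin n) (1 : ZMod p)) ∈
          Submodule.span (ZMod p)
            {(Pi.single (⟨0, hn⟩ : Fin n) (1 : ZMod p) : Fin n → ZMod p)} :=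
    fun x => mem_normalizer_iff_line p n hn x
  refine ⟨part1, inter_eq_bot p n hn, ?_, ?_⟩
  · -- the count for m = p
    set pt₀ := Projectivization.mk (ZMod p) (e₀ p n hn) (e₀_ne_zero p n hn) with hpt
    have hmem : ∀ x : {x : Projectivization (ZMod p) (Fin n → ZMod p) // x ≠ pt₀},
        ((fun y => y * (SemidirectProduct.inr (mx p n hn x.1)⁻¹ : AffGL p n)) ''
          ((Subgroup.normalizer (lineSubgroup p n hn : Set (AffGL p n))) : Set (AffGL p n))) ∈
          commOrbits (lineSubgroup p n hn) p := by
      intro x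
      refine ⟨SemidirectProduct.inr (mx p n hn x.1)⁻¹, ?_, rfl⟩
      rw [commSet_line_p]
      exact gx_not_mem p n hn x.1 x.2
    have key : Nat.card {x : Projectivization (ZMod p) (Fin n → ZMod p) // x ≠ pt₀} =
        Nat.card (commOrbits (lineSubgroup p n hn) p) := by
      refine Nat.card_eq_of_bijective (fun x => ⟨_, hmem x⟩) ⟨?_, ?_⟩
      · -- injective
        rintro x y h
        have hsets := congrArg Subtype.val h
        have hN := (coset_image_eq_iff (Subgroup.normalizer (lineSubgroup p n hn : Set (AffGL p n))) _ _).mp hsets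
        rw [← map_inv, ← map_mul] at hN
        rw [mem_normalizer_iff_line] at hN
        simp only [SemidirectProduct.right_inr] at hN
        obtain ⟨c, hc⟩ := Submodule.mem_span_singleton.mp hN
        rw [inv_inv, Units.val_mul, ← Matrix.mulVec_mulVec, mx_spec] at hc
        have hc' : c • x.1.rep = y.1.rep := by
          have := congrArg (fun w => (mx p n hn x.1).val.mulVec w) hc
          simp only [Matrix.mulVec_smul, Matrix.mulVec_mulVec] at this
          rw [mx_spec] at this
          rw [← Units.val_mul, mul_inv_cancel, Units.val_one, Matrix.one_mulVec] at this
          exact this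
        have hc0 : c ≠ 0 := by
          rintro rfl
          exact y.1.rep_nonzero (by rw [← hc', zero_smul])
        refine Subtype.ext ?_
        rw [← x.1.mk_rep, ← y.1.mk_rep, Projectivization.mk_eq_mk_iff]
        exact ⟨(Units.mk0 c hc0)⁻¹, by
          show ((Units.mk0 c hc0)⁻¹).val • y.1.rep = x.1.rep
          rw [← hc', smul_smul]
          simp [inv_mul_cancel₀ hc0]⟩
      · -- surjective
        rintro ⟨s, hs⟩
        obtain ⟨g, hgmem, rfl⟩ := hs
        rw [commSet_line_p] at hgmem
        have hgN : g ∉ (Subgroup.normalizer (lineSubgroup p n hn : Set (AffGL p n))) := hgmem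
        set v : Fin n → ZMod p := (g.right⁻¹).val.mulVec (e₀ p n hn) with hvdef
        have hback : g.right.val.mulVec v = e₀ p n hn := by
          rw [hvdef, Matrix.mulVec_mulVec, ← Units.val_mul, mul_inv_cancel, Units.val_one,
            Matrix.one_mulVec]
        have hv : v ≠ 0 := by
          intro h0
          apply e₀_ne_zero p n hn
          rw [← hback, h0, Matrix.mulVec_zero]
        have hx : Projectivization.mk (ZMod p) v hv ≠ pt₀ := by
          intro hxe
          apply hgN
          rw [mem_normalizer_iff_line, span_inv_iff]
          obtain ⟨a, ha⟩ := (Projectivization.mk_eq_mk_iff _ _ _ _ _).mp hxe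
          exact Submodule.mem_span_singleton.mpr ⟨a.val, ha⟩
        refine ⟨⟨Projectivization.mk (ZMod p) v hv, hx⟩, Subtype.ext ?_⟩
        rw [coset_image_eq_iff]
        rw [mem_normalizer_iff_line]
        have hrt : ((SemidirectProduct.inr (mx p n hn (Projectivization.mk (ZMod p) v hv))⁻¹ :
            AffGL p n) * g⁻¹).right =
            (mx p n hn (Projectivization.mk (ZMod p) v hv))⁻¹ * g.right⁻¹ := by
          simp
        rw [hrt]
        have hrepmk : Projectivization.mk (ZMod p)
            ((Projectivization.mk (ZMod p) v hv).rep)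
            (Projectivization.rep_nonzero _) = Projectivization.mk (ZMod p) v hv :=
          Projectivization.mk_rep _
        obtain ⟨a, ha⟩ := (Projectivization.mk_eq_mk_iff _ _ _ _ _).mp hrepmk
        have hva : v = (a⁻¹).val • (Projectivization.mk (ZMod p) v hv).rep := by
          have ha' : a.val • v = (Projectivization.mk (ZMod p) v hv).rep := ha
          rw [← ha', smul_smul, ← Units.val_mul, inv_mul_cancel, Units.val_one, one_smul]
        have he2 : ((mx p n hn (Projectivization.mk (ZMod p) v hv))⁻¹).val.mulVec
            ((Projectivization.mk (ZMod p) v hv).rep) = e₀ p n hn := by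
          conv_lhs => rw [← mx_spec p n hn (Projectivization.mk (ZMod p) v hv)]
          rw [Matrix.mulVec_mulVec, ← Units.val_mul, inv_mul_cancel, Units.val_one,
            Matrix.one_mulVec]
        have calc1 : (((mx p n hn (Projectivization.mk (ZMod p) v hv))⁻¹ * g.right⁻¹)).val.mulVec
            (e₀ p n hn) = ((mx p n hn (Projectivization.mk (ZMod p) v hv))⁻¹).val.mulVec v := by
          rw [Units.val_mul, ← Matrix.mulVec_mulVec]
        have calc15 : ((mx p n hn (Projectivization.mk (ZMod p) v hv))⁻¹).val.mulVec v =
            ((mx p n hn (Projectivization.mk (ZMod p) v hv))⁻¹).val.mulVec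
              ((a⁻¹).val • (Projectivization.mk (ZMod p) v hv).rep) :=
          congrArg _ hva
        have calc2 : ((mx p n hn (Projectivization.mk (ZMod p) v hv))⁻¹).val.mulVec
            ((a⁻¹).val • (Projectivization.mk (ZMod p) v hv).rep) =
            (a⁻¹).val • e₀ p n hn := by
          rw [Matrix.mulVec_smul, he2]
        rw [calc1, calc15, calc2]
        exact Submodule.smul_mem _ _ (Submodule.mem_span_singleton_self _)
    show Nat.card (commOrbits (lineSubgroup p n hn) p) = (p ^ n - 1) / (p - 1) - 1
    rw [← key, card_proj_ne]
  · intro m hm1 hmp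
    have hempty : commOrbits (lineSubgroup p n hn) m = ∅ := by
      ext s
      simp [commOrbits, commSet_line_other p n hn m hm1 hmp]
    show Nat.card (commOrbits (lineSubgroup p n hn) m) = 0
    rw [hempty]
    exact Nat.card_of_isEmpty
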